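/- Let γ¹,…,γᵐ ∈ R₊^d with Σ_ℓ γℓ strictly positive, and Θ = {θ ∈ (0,∞)^d : θ = Σ_ℓ λ_ℓ γℓ, λ in the unit simplex}. Then for every w ∈ R^d, ‖w‖_Θ = inf{ Σ_ℓ ‖v_ℓ‖_{γℓ} : supp(v_ℓ) ⊆ supp(γℓ), Σ_ℓ v_ℓ = w }, where ‖v‖_γ = sqrt(Σ_{i: γ_i>0} v_i²/γ_i). -/

import Mathlib

noncomputable def thetaNorm {d : ℕ} (Θ : Set (Fin d → ℝ)) (w : Fin d → ℝ) : ℝ :=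
  Real.sqrt (⨅ θ : Θ, ∑ i, w i ^ 2 / (θ : Fin d → ℝ) i)

noncomputable def gammaSemi {d : ℕ} (γ v : Fin d → ℝ) : ℝ :=
  Real.sqrt (∑ i, if 0 < γ i then v i ^ 2 / γ i else 0)

/-- Direction "≥": from θ in Θ, construct a decomposition whose value is at most √(Q θ). -/
lemma lemA {d m : ℕ} (γ : Fin m → Fin d → ℝ) (hγ : ∀ ℓ i, 0 ≤ γ ℓ i)
    (w : Fin d → ℝ) (θ : Fin d → ℝ) (hθpos : ∀ i, 0 < θ i)
    (lam : Fin m → ℝ) (hlam : ∀ ℓ, 0 ≤ lam ℓ) (hlam1 : ∑ ℓ, lam ℓ = 1)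
    (hθ : θ = ∑ ℓ, lam ℓ • γ ℓ) :
    ∃ v : Fin m → Fin d → ℝ, (∀ ℓ i, γ ℓ i = 0 → v ℓ i = 0) ∧ (∑ ℓ, v ℓ) = w ∧
      ∑ ℓ, gammaSemi (γ ℓ) (v ℓ) ≤ Real.sqrt (∑ i, w i ^ 2 / θ i) := by
  classical
  have hθi : ∀ i, θ i = ∑ ℓ, lam ℓ * γ ℓ i := by
    intro i; rw [hθ]; simp [Finset.sum_apply]
  refine ⟨fun ℓ i => lam ℓ * γ ℓ i * w i / θ i, ?_, ?_, ?_⟩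
  · intro ℓ i h; simp [h]
  · funext i
    simp only [Finset.sum_apply]
    rw [← Finset.sum_div, ← Finset.sum_mul, ← hθi i]
    rw [mul_comm, mul_div_assoc, div_self (hθpos i).ne', mul_one]
  · set Sf : Fin m → ℝ := fun ℓ => ∑ i, γ ℓ i * (w i ^ 2 / θ i ^ 2) with hSf
    have hSnn : ∀ ℓ, 0 ≤ Sf ℓ := fun ℓ =>
      Finset.sum_nonneg fun i _ => mul_nonneg (hγ ℓ i) (by positivity)
    have hsum : ∀ ℓ, (∑ i, if 0 < γ ℓ i then (lam ℓ * γ ℓ i * w i / θ i) ^ 2 / γ ℓ i else 0)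
        = lam ℓ * (lam ℓ * Sf ℓ) := by
      intro ℓ
      rw [hSf]
      rw [Finset.mul_sum, Finset.mul_sum]
      refine Finset.sum_congr rfl fun i _ => ?_
      by_cases h : 0 < γ ℓ i
      · rw [if_pos h]
        have h1 : γ ℓ i ≠ 0 := h.ne'
        have h2 : θ i ≠ 0 := (hθpos i).ne'
        field_simp
      · have h0 : γ ℓ i = 0 := le_antisymm (not_lt.1 h) (hγ ℓ i)
        rw [if_neg h, h0]
        ring
    have hg : ∀ ℓ, gammaSemi (γ ℓ) (fun i => lam ℓ * γ ℓ i * w i / θ i)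
        = Real.sqrt (lam ℓ) * Real.sqrt (lam ℓ * Sf ℓ) := by
      intro ℓ
      rw [gammaSemi, hsum ℓ, Real.sqrt_mul (hlam ℓ)]
    calc ∑ ℓ, gammaSemi (γ ℓ) (fun i => lam ℓ * γ ℓ i * w i / θ i)
        = ∑ ℓ, Real.sqrt (lam ℓ) * Real.sqrt (lam ℓ * Sf ℓ) := by
          exact Finset.sum_congr rfl fun ℓ _ => hg ℓ
      _ ≤ Real.sqrt (∑ ℓ, lam ℓ) * Real.sqrt (∑ ℓ, lam ℓ * Sf ℓ) :=
          Real.sum_sqrt_mul_sqrt_le _ hlam (fun ℓ => mul_nonneg (hlam ℓ) (hSnn ℓ))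
      _ = Real.sqrt (∑ i, w i ^ 2 / θ i) := by
          rw [hlam1, Real.sqrt_one, one_mul]
          congr 1
          simp only [hSf, Finset.mul_sum]
          rw [Finset.sum_comm]
          refine Finset.sum_congr rfl fun i _ => ?_
          simp_rw [← mul_assoc]
          rw [← Finset.sum_mul, ← hθi i]
          have h2 : θ i ≠ 0 := (hθpos i).ne'
          field_simp

/-- Direction "≤": from a decomposition v, construct θ in Θ with Q θ nearly (∑‖v‖)². -/
lemma lemB {d m : ℕ} (hm : 0 < m) (γ : Fin m → Fin d → ℝ) (hγ : ∀ ℓ i, 0 ≤ γ ℓ i)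
    (hpos : ∀ i, 0 < ∑ ℓ, γ ℓ i) (w : Fin d → ℝ)
    (v : Fin m → Fin d → ℝ) (hsupp : ∀ ℓ i, γ ℓ i = 0 → v ℓ i = 0) (hsum : (∑ ℓ, v ℓ) = w)
    {δ : ℝ} (hδ : 0 < δ) :
    ∃ θ : Fin d → ℝ, ((∀ i, 0 < θ i) ∧ ∃ lam : Fin m → ℝ, (∀ ℓ, 0 ≤ lam ℓ) ∧
        ∑ ℓ, lam ℓ = 1 ∧ θ = ∑ ℓ, lam ℓ • γ ℓ) ∧
      ∑ i, w i ^ 2 / θ i ≤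
        (∑ ℓ, gammaSemi (γ ℓ) (v ℓ)) * ((∑ ℓ, gammaSemi (γ ℓ) (v ℓ)) + m * δ) := by
  classical
  set a : Fin m → ℝ := fun ℓ => gammaSemi (γ ℓ) (v ℓ) with ha
  have hann : ∀ ℓ, 0 ≤ a ℓ := fun ℓ => Real.sqrt_nonneg _
  have hsq : ∀ ℓ, a ℓ ^ 2 = ∑ i, (if 0 < γ ℓ i then v ℓ i ^ 2 / γ ℓ i else 0) := by
    intro ℓ
    show gammaSemi (γ ℓ) (v ℓ) ^ 2 = _
    rw [gammaSemi, Real.sq_sqrt]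
    exact Finset.sum_nonneg fun i _ => by
      split
      · exact div_nonneg (sq_nonneg _) (hγ ℓ i)
      · exact le_rfl
  set A : ℝ := ∑ ℓ, a ℓ with hA
  have hAnn : 0 ≤ A := Finset.sum_nonneg fun ℓ _ => hann ℓ
  set c : ℝ := A + m * δ with hc
  have hcpos : 0 < c := by
    have : (0:ℝ) < m := by exact_mod_cast hm
    nlinarith
  set lam : Fin m → ℝ := fun ℓ => (a ℓ + δ) / c with hlam
  have hlampos : ∀ ℓ, 0 < lam ℓ := fun ℓ => div_pos (by linarith [hann ℓ]) hcpos
  have hlam1 : ∑ ℓ, lam ℓ = 1 := by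
    rw [hlam, ← Finset.sum_div]
    rw [Finset.sum_add_distrib, ← hA]
    simp only [Finset.sum_const, Finset.card_univ, Fintype.card_fin, nsmul_eq_mul]
    rw [← hc, div_self hcpos.ne']
  set θ : Fin d → ℝ := ∑ ℓ, lam ℓ • γ ℓ with hθ
  have hθi : ∀ i, θ i = ∑ ℓ, lam ℓ * γ ℓ i := by
    intro i; rw [hθ]; simp [Finset.sum_apply]
  have hθpos : ∀ i, 0 < θ i := by
    intro i
    rw [hθi i]
    have hex : ∃ ℓ, 0 < γ ℓ i := by
      by_contra h
      push_neg at h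
      have : ∑ ℓ, γ ℓ i = 0 :=
        Finset.sum_eq_zero fun ℓ _ => le_antisymm (h ℓ) (hγ ℓ i)
      exact absurd this (hpos i).ne'
    obtain ⟨ℓ₀, hℓ₀⟩ := hex
    refine Finset.sum_pos' (fun ℓ _ => mul_nonneg (hlampos ℓ).le (hγ ℓ i)) ?_
    exact ⟨ℓ₀, Finset.mem_univ _, mul_pos (hlampos ℓ₀) hℓ₀⟩
  refine ⟨θ, ⟨hθpos, lam, fun ℓ => (hlampos ℓ).le, hlam1, rfl⟩, ?_⟩
  -- per-coordinate Engel form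
  have per_i : ∀ i, w i ^ 2 / θ i ≤
      ∑ ℓ, (if 0 < γ ℓ i then v ℓ i ^ 2 / γ ℓ i else 0) / lam ℓ := by
    intro i
    set s : Finset (Fin m) := Finset.univ.filter (fun ℓ => 0 < γ ℓ i) with hs
    have hw : w i = ∑ ℓ ∈ s, v ℓ i := by
      rw [hs]
      rw [Finset.sum_filter_of_ne]
      · rw [← hsum]; simp [Finset.sum_apply]
      · intro ℓ _ hne
        by_contra h
        exact hne (hsupp ℓ i (le_antisymm (not_lt.1 h) (hγ ℓ i)))
    have hθs : θ i = ∑ ℓ ∈ s, lam ℓ * γ ℓ i := by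
      rw [hθi i, hs, Finset.sum_filter_of_ne]
      intro ℓ _ hne
      by_contra h
      exact hne (by rw [le_antisymm (not_lt.1 h) (hγ ℓ i), mul_zero])
    have engel := Finset.sq_sum_div_le_sum_sq_div s (fun ℓ => v ℓ i)
      (g := fun ℓ => lam ℓ * γ ℓ i)
      (fun ℓ hℓ => mul_pos (hlampos ℓ) (by simpa [hs] using hℓ))
    rw [hw, hθs]
    refine engel.trans ?_
    have : ∀ ℓ ∈ s, v ℓ i ^ 2 / (lam ℓ * γ ℓ i)
        = (if 0 < γ ℓ i then v ℓ i ^ 2 / γ ℓ i else 0) / lam ℓ := by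
      intro ℓ hℓ
      have hℓ' : 0 < γ ℓ i := by simpa [hs] using hℓ
      rw [if_pos hℓ', div_mul_eq_div_div_swap]
    rw [Finset.sum_congr rfl this]
    refine Finset.sum_le_sum_of_subset_of_nonneg (Finset.filter_subset _ _) ?_
    intro ℓ _ _
    refine div_nonneg ?_ (hlampos ℓ).le
    split
    · exact div_nonneg (sq_nonneg _) (hγ ℓ i)
    · exact le_rfl
  calc ∑ i, w i ^ 2 / θ i
      ≤ ∑ i, ∑ ℓ, (if 0 < γ ℓ i then v ℓ i ^ 2 / γ ℓ i else 0) / lam ℓ :=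
        Finset.sum_le_sum fun i _ => per_i i
    _ = ∑ ℓ, a ℓ ^ 2 / lam ℓ := by
        rw [Finset.sum_comm]
        refine Finset.sum_congr rfl fun ℓ _ => ?_
        rw [← Finset.sum_div]
        congr 1
        exact (hsq ℓ).symm
    _ ≤ ∑ ℓ, c * a ℓ := by
        refine Finset.sum_le_sum fun ℓ _ => ?_
        rw [hlam, div_div_eq_mul_div, mul_comm (a ℓ ^ 2) c, mul_div_assoc]
        refine mul_le_mul_of_nonneg_left ?_ hcpos.le
        rw [div_le_iff₀ (by linarith [hann ℓ])]
        nlinarith [hann ℓ]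
    _ = A * (A + m * δ) := by
        rw [← Finset.mul_sum, ← hA, ← hc, mul_comm]

set_option maxHeartbeats 1000000 in
theorem theta_norm_inf_convolution {d m : ℕ} (γ : Fin m → Fin d → ℝ)
    (hγ : ∀ ℓ i, 0 ≤ γ ℓ i) (hpos : ∀ i, 0 < ∑ ℓ, γ ℓ i) (w : Fin d → ℝ) :
    thetaNorm {θ : Fin d → ℝ | (∀ i, 0 < θ i) ∧
        ∃ lam : Fin m → ℝ, (∀ ℓ, 0 ≤ lam ℓ) ∧ ∑ ℓ, lam ℓ = 1 ∧
          θ = ∑ ℓ, lam ℓ • γ ℓ} w =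
      sInf {x : ℝ | ∃ v : Fin m → Fin d → ℝ,
        (∀ ℓ i, γ ℓ i = 0 → v ℓ i = 0) ∧ ∑ ℓ, v ℓ = w ∧
        x = ∑ ℓ, gammaSemi (γ ℓ) (v ℓ)} := by
  classical
  rcases Nat.eq_zero_or_pos m with hm | hm
  · -- degenerate case m = 0 : then d = 0 as well
    subst hm
    have hde : IsEmpty (Fin d) := by
      constructor
      intro i
      simpa using hpos i
    haveI hempty : IsEmpty (↥{θ : Fin d → ℝ | (∀ i, 0 < θ i) ∧
        ∃ lam : Fin 0 → ℝ, (∀ ℓ, 0 ≤ lam ℓ) ∧ ∑ ℓ, lam ℓ = 1 ∧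
          θ = ∑ ℓ, lam ℓ • γ ℓ}) := by
      constructor
      rintro ⟨θ, -, lam, -, h1, -⟩
      simp at h1
    have hS : {x : ℝ | ∃ v : Fin 0 → Fin d → ℝ,
        (∀ ℓ i, γ ℓ i = 0 → v ℓ i = 0) ∧ ∑ ℓ, v ℓ = w ∧
        x = ∑ ℓ, gammaSemi (γ ℓ) (v ℓ)} = {0} := by
      ext x
      simp only [Set.mem_setOf_eq, Set.mem_singleton_iff]
      constructor
      · rintro ⟨v, -, -, rfl⟩; simp
      · rintro rfl
        exact ⟨fun _ => 0, fun ℓ => ℓ.elim0, by funext i; exact hde.elim i, by simp⟩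
    rw [hS, csInf_singleton, thetaNorm, Real.iInf_of_isEmpty, Real.sqrt_zero]
  -- main case
  set ΘS : Set (Fin d → ℝ) := {θ : Fin d → ℝ | (∀ i, 0 < θ i) ∧
      ∃ lam : Fin m → ℝ, (∀ ℓ, 0 ≤ lam ℓ) ∧ ∑ ℓ, lam ℓ = 1 ∧
        θ = ∑ ℓ, lam ℓ • γ ℓ} with hΘS
  set S : Set ℝ := {x : ℝ | ∃ v : Fin m → Fin d → ℝ,
      (∀ ℓ i, γ ℓ i = 0 → v ℓ i = 0) ∧ ∑ ℓ, v ℓ = w ∧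
      x = ∑ ℓ, gammaSemi (γ ℓ) (v ℓ)} with hSdef
  set Q : ↥ΘS → ℝ := fun θ => ∑ i, w i ^ 2 / (θ : Fin d → ℝ) i with hQ
  -- a canonical element of Θ
  have hmR : (0:ℝ) < m := by exact_mod_cast hm
  have hθ0 : (∑ ℓ, ((m:ℝ)⁻¹) • γ ℓ) ∈ ΘS := by
    refine ⟨?_, fun _ => (m:ℝ)⁻¹, fun _ => by positivity, ?_, rfl⟩
    · intro i
      have : (∑ ℓ, ((m:ℝ)⁻¹) • γ ℓ) i = (m:ℝ)⁻¹ * ∑ ℓ, γ ℓ i := by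
        simp [Finset.sum_apply, Finset.mul_sum]
      rw [this]
      exact mul_pos (by positivity) (hpos i)
    · simp [Finset.sum_const, Finset.card_univ]
      field_simp
  have hQ0 : ∀ θ : ↥ΘS, 0 ≤ Q θ := by
    intro θ
    refine Finset.sum_nonneg fun i _ => div_nonneg (sq_nonneg _) ?_
    exact (θ.2.1 i).le
  have hQbdd : BddBelow (Set.range Q) := by
    refine ⟨0, ?_⟩
    rintro x ⟨θ, rfl⟩
    exact hQ0 θ
  have hInf0 : 0 ≤ ⨅ θ : ΘS, Q θ := by
    haveI : Nonempty ↥ΘS := ⟨⟨_, hθ0⟩⟩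
    exact le_ciInf hQ0
  have hS0 : ∀ x ∈ S, 0 ≤ x := by
    rintro x ⟨v, -, -, rfl⟩
    exact Finset.sum_nonneg fun ℓ _ => Real.sqrt_nonneg _
  have hSbdd : BddBelow S := ⟨0, hS0⟩
  have hSne : S.Nonempty := by
    obtain ⟨hp, lam, h1, h2, h3⟩ := hθ0
    obtain ⟨v, hv1, hv2, _⟩ := lemA γ hγ w _ hp lam h1 h2 h3
    exact ⟨_, v, hv1, hv2, rfl⟩
  have hAnn : 0 ≤ sInf S := le_csInf hSne hS0
  -- sInf S ≤ sqrt (iInf Q)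
  have dir1 : sInf S ≤ Real.sqrt (⨅ θ : ΘS, Q θ) := by
    have h1 : ∀ θ : ↥ΘS, sInf S ≤ Real.sqrt (Q θ) := by
      rintro ⟨θ, hp, lam, hl1, hl2, hl3⟩
      obtain ⟨v, hv1, hv2, hv3⟩ := lemA γ hγ w θ hp lam hl1 hl2 hl3
      exact le_trans (csInf_le hSbdd ⟨v, hv1, hv2, rfl⟩) hv3
    have h2 : (sInf S) ^ 2 ≤ ⨅ θ : ΘS, Q θ := by
      haveI : Nonempty ↥ΘS := ⟨⟨_, hθ0⟩⟩
      refine le_ciInf fun θ => ?_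
      have := pow_le_pow_left₀ hAnn (h1 θ) 2
      rwa [Real.sq_sqrt (hQ0 θ)] at this
    calc sInf S = Real.sqrt ((sInf S) ^ 2) := (Real.sqrt_sq hAnn).symm
      _ ≤ Real.sqrt (⨅ θ : ΘS, Q θ) := Real.sqrt_le_sqrt h2
  -- sqrt (iInf Q) ≤ sInf S
  have dir2 : Real.sqrt (⨅ θ : ΘS, Q θ) ≤ sInf S := by
    refine le_csInf hSne ?_
    rintro x ⟨v, hv1, hv2, rfl⟩
    set x := ∑ ℓ, gammaSemi (γ ℓ) (v ℓ) with hx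
    have hxnn : 0 ≤ x := Finset.sum_nonneg fun ℓ _ => Real.sqrt_nonneg _
    have key : (⨅ θ : ΘS, Q θ) ≤ x ^ 2 := by
      by_contra hcon
      push_neg at hcon
      set ε := ((⨅ θ : ΘS, Q θ) - x ^ 2) / 2 with hε
      have hεpos : 0 < ε := by simp only [hε]; linarith
      have hδpos : 0 < ε / (m * x + 1) := by positivity
      obtain ⟨θ, hθmem, hθle⟩ := lemB hm γ hγ hpos w v hv1 hv2 hδpos
      have hle2 : x * (x + m * (ε / (m * x + 1))) ≤ x ^ 2 + ε := by
        have h3 : x * (m * (ε / (m * x + 1))) ≤ ε := by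
          have hpos1 : (0:ℝ) < m * x + 1 := by positivity
          rw [show x * (↑m * (ε / (↑m * x + 1))) = (x * ↑m) * ε / (↑m * x + 1) from by ring,
            div_le_iff₀ hpos1]
          nlinarith
        nlinarith
      have : (⨅ θ : ΘS, Q θ) ≤ x ^ 2 + ε :=
        ciInf_le_of_le hQbdd ⟨θ, hθmem⟩ (le_trans hθle hle2)
      simp only [hε] at this
      linarith
    calc Real.sqrt (⨅ θ : ΘS, Q θ) ≤ Real.sqrt (x ^ 2) := Real.sqrt_le_sqrt key
      _ = x := Real.sqrt_sq hxnn
  rw [thetaNorm]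
  exact le_antisymm dir2 dir1
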